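/- Under the Setup with standing assumption (†): (i) every vertex y ∈ B ∪ {p} satisfies |L(y) ∩ Λ| ≥ r − b = a; (ii) no vertex y ∈ B is movable to the class of any accessible color; (iii) a ≤ d(p). -/

import Mathlib

open Finset

namespace EqListColoring

open scoped Classical

/-- `n mod* r` : the unique `i ∈ {1, …, r}` with `r ∣ n - i` (for `n, r ≥ 1`). -/
def modStar (n r : ℕ) : ℕ := if n % r = 0 then r else n % r

variable {V : Type*}

/-- `s = ⌈|V(G')|/r⌉ = ⌈(|V| - 1)/r⌉`, the maximum allowed class size. -/
noncomputable def sVal (V : Type*) [Fintype V] (r : ℕ) : ℕ :=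
  ⌈((Fintype.card V - 1 : ℕ) : ℚ) / r⌉₊

/-- The class `γ̃ = f⁻¹(γ)` of color `γ` in the coloring `f` of `G' = G - p`. -/
noncomputable def classOf [Fintype V] [DecidableEq V] (p : V) (f : V → ℕ) (γ : ℕ) : Finset V :=
  (Finset.univ.erase p).filter (fun v => f v = γ)

/-- `Γ`, the union of all lists. -/
noncomputable def colorSet [Fintype V] (L : V → Finset ℕ) : Finset ℕ :=
  Finset.univ.biUnion L

/-- `x` is movable to the class `γ̃`: `γ ∈ L(x)` and `x` has no neighbor in `γ̃`. -/
def MovableTo [Fintype V] [DecidableEq V] (G : SimpleGraph V) (L : V → Finset ℕ)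
    (p : V) (f : V → ℕ) (x : V) (γ : ℕ) : Prop :=
  γ ∈ L x ∧ ∀ y ∈ classOf p f γ, ¬ G.Adj x y

/-- The arcs of the auxiliary digraph `H` on the colors: `α → β` iff `α ≠ β` and
some vertex of the class `α̃` is movable to `β̃`. -/
def Arc [Fintype V] [DecidableEq V] (G : SimpleGraph V) (L : V → Finset ℕ)
    (p : V) (f : V → ℕ) (α β : ℕ) : Prop :=
  α ≠ β ∧ ∃ x ∈ classOf p f α, MovableTo G L p f x β

/-- A color `γ ∈ Γ` is accessible if `H` has a (possibly trivial) directed path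
from `γ` to a color of `Γ` whose class is light. -/
def Accessible [Fintype V] [DecidableEq V] (G : SimpleGraph V) (L : V → Finset ℕ)
    (p : V) (f : V → ℕ) (s γ : ℕ) : Prop :=
  γ ∈ colorSet L ∧ ∃ δ ∈ colorSet L,
    Relation.ReflTransGen (Arc G L p f) γ δ ∧ (classOf p f δ).card < s

/-- `Λ`, the set of accessible colors. -/
noncomputable def lamSet [Fintype V] [DecidableEq V] (G : SimpleGraph V) (L : V → Finset ℕ)
    (p : V) (f : V → ℕ) (s : ℕ) : Finset ℕ :=
  (colorSet L).filter (Accessible G L p f s)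

/-- `Φ = Γ ∖ Λ`, the set of inaccessible colors. -/
noncomputable def phiSet [Fintype V] [DecidableEq V] (G : SimpleGraph V) (L : V → Finset ℕ)
    (p : V) (f : V → ℕ) (s : ℕ) : Finset ℕ :=
  colorSet L \ lamSet G L p f s

/-- `A = ⋃_{λ ∈ Λ} λ̃`. -/
noncomputable def aSet [Fintype V] [DecidableEq V] (G : SimpleGraph V) (L : V → Finset ℕ)
    (p : V) (f : V → ℕ) (s : ℕ) : Finset V :=
  (lamSet G L p f s).biUnion (classOf p f)

/-- `B = ⋃_{φ ∈ Φ} φ̃`. -/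
noncomputable def bSet [Fintype V] [DecidableEq V] (G : SimpleGraph V) (L : V → Finset ℕ)
    (p : V) (f : V → ℕ) (s : ℕ) : Finset V :=
  (phiSet G L p f s).biUnion (classOf p f)

/-- `f` is a strongly equitable (SE) `L`-coloring of `G' = G - p`:
a proper coloring of `G - p` from the lists in which every class has size at most
`s = ⌈(|V|-1)/r⌉` and at most `(|V|-1) mod* r` classes have size exactly `s`. -/
def IsSE [Fintype V] [DecidableEq V] (G : SimpleGraph V) (r : ℕ) (L : V → Finset ℕ)
    (p : V) (f : V → ℕ) : Prop :=
  (∀ v, v ≠ p → f v ∈ L v) ∧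
  (∀ u v, u ≠ p → v ≠ p → G.Adj u v → f u ≠ f v) ∧
  (∀ γ : ℕ, (classOf p f γ).card ≤ sVal V r) ∧
  ((colorSet L).filter (fun γ => (classOf p f γ).card = sVal V r)).card
    ≤ modStar (Fintype.card V - 1) r

/-- The set-up of the proof of the main theorem: `r ≥ 9`, `G` is a graph in class ℬ
on at least two vertices with `Δ(G) ≤ r`, `L` is an `r`-list assignment for `G`,
`p` is a vertex of minimum degree, `f` is an SE `L`-coloring of `G' = G - p`, and
(†) `p` is not movable to the class of any accessible color. -/
structure Setup (V : Type*) [Fintype V] [DecidableEq V] where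
  G : SimpleGraph V
  r : ℕ
  L : V → Finset ℕ
  p : V
  f : V → ℕ
  hr : 9 ≤ r
  hB : ∀ X Y : Finset V, Disjoint X Y → 3 ≤ (X ∪ Y).card →
      ((X ×ˢ Y).filter (fun e => G.Adj e.1 e.2)).card ≤ 2 * (X ∪ Y).card - 4
  hΔ : ∀ v, (Finset.univ.filter (fun u => G.Adj v u)).card ≤ r
  hV : 2 ≤ Fintype.card V
  hL : ∀ v, (L v).card = r
  hpmin : ∀ v, (Finset.univ.filter (fun u => G.Adj p u)).card
      ≤ (Finset.univ.filter (fun u => G.Adj v u)).card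
  hSE : IsSE G r L p f
  hdagger : ∀ γ : ℕ, Accessible G L p f (sVal V r) γ → ¬ MovableTo G L p f p γ

namespace Setup

variable [Fintype V] [DecidableEq V] (S : Setup V)

/-- The maximum allowed class size `s`. -/
noncomputable def s : ℕ := sVal V S.r

/-- The class `γ̃` of a color `γ`. -/
noncomputable def cls (γ : ℕ) : Finset V := classOf S.p S.f γ

/-- The color set `Γ`. -/
noncomputable def Γ : Finset ℕ := colorSet S.L

/-- The set `Λ` of accessible colors. -/
noncomputable def Λ : Finset ℕ := lamSet S.G S.L S.p S.f S.s

/-- The set `Φ = Γ ∖ Λ` of inaccessible colors. -/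
noncomputable def Φ : Finset ℕ := phiSet S.G S.L S.p S.f S.s

/-- `b = |Φ|`. -/
noncomputable def b : ℕ := S.Φ.card

/-- `a = r - b`. -/
noncomputable def 𝒶 : ℕ := S.r - S.b

/-- `A = ⋃_{λ ∈ Λ} λ̃`. -/
noncomputable def A : Finset V := aSet S.G S.L S.p S.f S.s

/-- `B = ⋃_{φ ∈ Φ} φ̃`. -/
noncomputable def B : Finset V := bSet S.G S.L S.p S.f S.s

/-- `‖z, X‖`, the number of neighbors of `z` in `X`. -/
noncomputable def nbr (z : V) (X : Finset V) : ℕ := (X.filter (fun y => S.G.Adj z y)).card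

/-- `y` is a solo neighbor of `z`: `y` is adjacent to `z`, `f(z) ∈ L(y)` and `z` is
the unique neighbor of `y` in the class of `f(z)`. -/
def SoloNbr (z y : V) : Prop :=
  S.G.Adj z y ∧ S.f z ∈ S.L y ∧ ∀ w ∈ S.cls (S.f z), S.G.Adj y w → w = z

/-- `S_z`, the set of solo neighbors `y ∈ B` of `z`. -/
noncomputable def soloSet (z : V) : Finset V := S.B.filter (fun y => S.SoloNbr z y)

/-- `z ∈ A` is a solo vertex: `S_z ≠ ∅` and if some class of an accessible color is
full then that class is the class of `z`. -/
def SoloVertex (z : V) : Prop :=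
  z ∈ S.A ∧ (S.soloSet z).Nonempty ∧ ∀ γ ∈ S.Λ, (S.cls γ).card = S.s → γ = S.f z

/-- A solo neighbor `y ∈ S_z` is useful if it is nonadjacent to some other solo
neighbor of `z`. -/
def Useful (z y : V) : Prop := ∃ y' ∈ S.soloSet z, y' ≠ y ∧ ¬ S.G.Adj y y'

/-- `S_z*`, the set of useful solo neighbors of `z`. -/
noncomputable def soloStar (z : V) : Finset V := (S.soloSet z).filter (S.Useful z)

/-- (O1) : among all SE `L`-colorings of `G' = G - p`, `f` maximizes `|A|`. -/
def O1 : Prop :=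
  ∀ f' : V → ℕ, IsSE S.G S.r S.L S.p f' →
    (aSet S.G S.L S.p f' S.s).card ≤ S.A.card

/-- (O2) : subject to (O1), `f` maximizes the number of accessible colors with
nonempty classes. -/
def O2 : Prop :=
  ∀ f' : V → ℕ, IsSE S.G S.r S.L S.p f' →
    (aSet S.G S.L S.p f' S.s).card = S.A.card →
    ((lamSet S.G S.L S.p f' S.s).filter (fun γ => (classOf S.p f' γ).Nonempty)).card
      ≤ (S.Λ.filter (fun γ => (S.cls γ).Nonempty)).card

end Setup

/-- Lemma 1 (under the Setup and (†)):
(i) every `y ∈ B ∪ {p}` satisfies `|L(y) ∩ Λ| ≥ r - b = a`;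
(ii) no vertex of `B` is movable to the class of any accessible color;
(iii) `a ≤ d(p)`. -/
theorem lemma_pr1 {V : Type*} [Fintype V] [DecidableEq V] (S : Setup V) :
    (∀ y ∈ insert S.p S.B, S.𝒶 ≤ (S.L y ∩ S.Λ).card) ∧
    (∀ y ∈ S.B, ∀ γ : ℕ, Accessible S.G S.L S.p S.f S.s γ →
      ¬ MovableTo S.G S.L S.p S.f y γ) ∧
    S.𝒶 ≤ (Finset.univ.filter (fun u => S.G.Adj S.p u)).card := by
  classical
  -- (i) for all vertices (purely counting)
  have hsub : ∀ y : V, S.𝒶 ≤ (S.L y ∩ S.Λ).card := by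
    intro y
    have hLΓ : S.L y ⊆ colorSet S.L := fun c hc =>
      Finset.mem_biUnion.2 ⟨y, Finset.mem_univ y, hc⟩
    have h1 : S.L y \ S.Φ ⊆ S.L y ∩ S.Λ := by
      intro c hc
      rw [Finset.mem_sdiff] at hc
      refine Finset.mem_inter.2 ⟨hc.1, ?_⟩
      by_contra h
      exact hc.2 (Finset.mem_sdiff.2 ⟨hLΓ hc.1, h⟩)
    calc S.𝒶 = S.r - S.b := rfl
      _ = (S.L y).card - S.Φ.card := by rw [S.hL y]; rfl
      _ ≤ (S.L y \ S.Φ).card := Finset.le_card_sdiff _ _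
      _ ≤ _ := Finset.card_le_card h1
  -- (ii)
  have hii : ∀ y ∈ S.B, ∀ γ : ℕ, Accessible S.G S.L S.p S.f S.s γ →
      ¬ MovableTo S.G S.L S.p S.f y γ := by
    intro y hy γ hacc hmov
    obtain ⟨φ, hφΦ, hycls⟩ := Finset.mem_biUnion.1 hy
    have hφΦ' := Finset.mem_sdiff.1 hφΦ
    have hne : φ ≠ γ := by
      intro h; subst h
      exact hφΦ'.2 (Finset.mem_filter.2 ⟨hφΦ'.1, hacc⟩)
    obtain ⟨hγΓ, δ, hδΓ, hpath, hlight⟩ := hacc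
    have hφacc : Accessible S.G S.L S.p S.f S.s φ :=
      ⟨hφΦ'.1, δ, hδΓ, Relation.ReflTransGen.head ⟨hne, y, hycls, hmov⟩ hpath, hlight⟩
    exact hφΦ'.2 (Finset.mem_filter.2 ⟨hφΦ'.1, hφacc⟩)
  -- (iii)
  have hiii : S.𝒶 ≤ (Finset.univ.filter (fun u => S.G.Adj S.p u)).card := by
    refine le_trans (hsub S.p) ?_
    have hex : ∀ γ ∈ S.L S.p ∩ S.Λ, ∃ y, y ∈ classOf S.p S.f γ ∧ S.G.Adj S.p y := by
      intro γ hγ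
      have hγ' := Finset.mem_inter.1 hγ
      have hacc : Accessible S.G S.L S.p S.f S.s γ := (Finset.mem_filter.1 hγ'.2).2
      have hnm := S.hdagger γ hacc
      by_contra h'
      push_neg at h'
      exact hnm ⟨hγ'.1, fun y hy hadj => h' y hy hadj⟩
    refine Finset.card_le_card_of_injOn
        (fun γ => if h : γ ∈ S.L S.p ∩ S.Λ then Classical.choose (hex γ h) else S.p)
        ?_ ?_
    · intro γ hγ
      have hγ' : γ ∈ S.L S.p ∩ S.Λ := hγ
      simp only [Finset.mem_coe, dif_pos hγ']
      exact Finset.mem_filter.2 ⟨Finset.mem_univ _, (Classical.choose_spec (hex γ hγ')).2⟩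
    · intro γ1 h1 γ2 h2 heq
      simp only at heq
      rw [Finset.mem_coe] at h1 h2
      rw [dif_pos h1, dif_pos h2] at heq
      have f1 := (Finset.mem_filter.1 (Classical.choose_spec (hex γ1 h1)).1).2
      have f2 := (Finset.mem_filter.1 (Classical.choose_spec (hex γ2 h2)).1).2
      rw [← f1, ← f2, heq]
  exact ⟨fun y hy => by
      rcases Finset.mem_insert.1 hy with h | h
      · exact h ▸ hsub S.p
      · exact hsub y, hii, hiii⟩


end EqListColoring
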